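/- Let [a₁,…,a_r] and [b₁,…,b_s] be conjugate Hirzebruch–Jung strings (equal to n/a and n/(n−a) for some coprime 0 < a < n), and let t ≥ 0. Then the conjugate of the string [a_r,…,a₁, t+2, b₁,…,b_s] is a T_{t+1}-string. -/

import Mathlib

/-- The Hirzebruch–Jung continued fraction `[b₁,…,b_r] = b₁ − 1/(b₂ − 1/(⋯ − 1/b_r))`,
evaluated in `ℚ` (using the convention `1/0 = 0`, so `hj [b] = b`). -/
def hj : List ℕ → ℚ
  | [] => 0
  | b :: l => (b : ℚ) - 1 / hj l

/-- `TString d l` : the list `l` is a `T_d`-string, generated inductively. -/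
inductive TString : ℕ → List ℕ → Prop
  | base₁ : TString 1 [4]
  | base (d : ℕ) (hd : 2 ≤ d) : TString d (3 :: (List.replicate (d - 2) 2 ++ [3]))
  | left (d b : ℕ) (l : List ℕ) (h : TString d (b :: l)) :
      TString d ((b + 1) :: (l ++ [2]))
  | right (d b : ℕ) (l : List ℕ) (h : TString d (l ++ [b])) :
      TString d (2 :: (l ++ [b + 1]))

/-! ### Auxiliary matrix formalism for Hirzebruch–Jung continued fractions -/

/-- Multiplication of 2×2 integer matrices written as 4-tuples (row-major). -/
def mulM : (ℤ×ℤ×ℤ×ℤ) → (ℤ×ℤ×ℤ×ℤ) → (ℤ×ℤ×ℤ×ℤ)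
  | (a,b,c,d), (e,f,g,h) => (a*e+b*g, a*f+b*h, c*e+d*g, c*f+d*h)

/-- The matrix `[[b,−1],[1,0]]` associated to an entry of a HJ string. -/
def hjM (b : ℕ) : ℤ×ℤ×ℤ×ℤ := ((b:ℤ), -1, 1, 0)

/-- The matrix of a HJ string. -/
def PC : List ℕ → ℤ×ℤ×ℤ×ℤ
  | [] => (1,0,0,1)
  | b :: l => mulM (hjM b) (PC l)

lemma PC_cons (b : ℕ) (l : List ℕ) : PC (b :: l) = mulM (hjM b) (PC l) := rfl

lemma mulM_assoc (x y z : ℤ×ℤ×ℤ×ℤ) : mulM (mulM x y) z = mulM x (mulM y z) := by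
  obtain ⟨a,b,c,d⟩ := x
  obtain ⟨e,f,g,h⟩ := y
  obtain ⟨i,j,k,l⟩ := z
  simp only [mulM, Prod.mk.injEq]
  refine ⟨by ring, by ring, by ring, by ring⟩

lemma PC_append (l₁ l₂ : List ℕ) : PC (l₁ ++ l₂) = mulM (PC l₁) (PC l₂) := by
  induction l₁ with
  | nil =>
    rcases hE : PC l₂ with ⟨e,f,g,h⟩
    simp [PC, mulM, hE]
  | cons b l ih => simp [PC, ih, mulM_assoc]

lemma PC_reverse (l : List ℕ) :
    PC l.reverse = ((PC l).1, -(PC l).2.2.1, -(PC l).2.1, (PC l).2.2.2) := by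
  induction l with
  | nil => simp [PC]
  | cons b l ih =>
    rcases hE : PC l with ⟨e,f,g,h⟩
    rw [hE] at ih
    rw [List.reverse_cons, PC_append, ih, PC_cons b l, hE]
    simp only [PC, hjM, mulM, Prod.mk.injEq]
    refine ⟨by ring, by ring, by ring, by ring⟩

lemma PC_det (l : List ℕ) : (PC l).1 * (PC l).2.2.2 - (PC l).2.1 * (PC l).2.2.1 = 1 := by
  induction l with
  | nil => simp [PC]
  | cons b l ih =>
    rcases hE : PC l with ⟨e,f,g,h⟩
    rw [hE] at ih
    rw [PC_cons, hE]
    simp only [hjM, mulM]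
    linear_combination ih

/-- invariants of the matrix of a nonempty string with entries ≥ 2 -/
lemma PC_inv (l : List ℕ) (h2 : ∀ x ∈ l, 2 ≤ x) (hne : l ≠ []) :
    1 ≤ (PC l).2.2.1 ∧ (PC l).2.2.1 < (PC l).1 ∧ (PC l).2.1 ≤ (PC l).2.2.2 ∧
    (PC l).2.2.2 ≤ 0 ∧ (PC l).2.1 ≤ -1 ∧ 1 ≤ (PC l).2.2.1 + (PC l).2.2.2 ∧
    (PC l).2.2.1 + (PC l).2.2.2 ≤ (PC l).1 + (PC l).2.1 := by
  induction l with
  | nil => exact absurd rfl hne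
  | cons b l ih =>
    have hb : (2:ℤ) ≤ (b:ℤ) := by exact_mod_cast h2 b List.mem_cons_self
    rcases l with _ | ⟨c, l'⟩
    · simp only [PC, hjM, mulM]
      norm_num
      omega
    · rcases hE : PC (c :: l') with ⟨e,f,g,h⟩
      have inv := ih (fun x hx => h2 x (List.mem_cons_of_mem b hx)) (by simp)
      rw [hE] at inv
      obtain ⟨i1, i2, i3, i4, i5, i7, i8⟩ := inv
      rw [PC_cons, hE]
      simp only [hjM, mulM]
      have t1 : 0 ≤ ((b:ℤ) - 2) * e := by nlinarith
      have t2 : 0 ≤ ((b:ℤ) - 2) * (-f) := by nlinarith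
      have t3 : 0 ≤ ((b:ℤ) - 2) * (e + f) := by nlinarith
      refine ⟨by linarith, by nlinarith, by nlinarith, by linarith, by nlinarith,
        by linarith, by nlinarith⟩

lemma PC_fst_pos (l : List ℕ) (h2 : ∀ x ∈ l, 2 ≤ x) : 1 ≤ (PC l).1 := by
  rcases eq_or_ne l [] with rfl | hne
  · simp [PC]
  · obtain ⟨i1, i2, _⟩ := PC_inv l h2 hne
    omega

lemma hj_PC (l : List ℕ) (h2 : ∀ x ∈ l, 2 ≤ x) :
    hj l = ((PC l).1 : ℚ) / ((PC l).2.2.1 : ℚ) := by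
  induction l with
  | nil => simp [hj, PC]
  | cons b l ih =>
    have he : (1:ℤ) ≤ (PC l).1 := PC_fst_pos l (fun x hx => h2 x (List.mem_cons_of_mem b hx))
    rcases hE : PC l with ⟨e,f,g,h⟩
    rw [hE] at he ih
    have he' : ((e:ℚ)) ≠ 0 := by
      have : (0:ℤ) < e := by omega
      exact_mod_cast this.ne'
    rw [hj, ih (fun x hx => h2 x (List.mem_cons_of_mem b hx)), PC_cons, hE]
    simp only [hjM, mulM, one_div_div]
    push_cast
    field_simp
    have hinv : (e:ℚ) * (e:ℚ)⁻¹ = 1 := mul_inv_cancel₀ he'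
    linear_combination (-(b:ℚ)*e + g) * hinv

lemma hj_gt_one (l : List ℕ) (h2 : ∀ x ∈ l, 2 ≤ x) (hne : l ≠ []) : 1 < hj l := by
  obtain ⟨i1, i2, _⟩ := PC_inv l h2 hne
  rw [hj_PC l h2]
  rw [one_lt_div (by exact_mod_cast i1 : (0:ℚ) < ((PC l).2.2.1 : ℚ))]
  exact_mod_cast i2

/-- uniqueness of Hirzebruch–Jung expansions with all entries ≥ 2 -/
lemma hj_inj : ∀ l₁ l₂ : List ℕ, (∀ x ∈ l₁, 2 ≤ x) → (∀ x ∈ l₂, 2 ≤ x) →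
    hj l₁ = hj l₂ → l₁ = l₂ := by
  intro l₁
  induction l₁ with
  | nil =>
    intro l₂ _ h2 h
    rcases l₂ with _ | ⟨b, m⟩
    · rfl
    · exfalso
      have := hj_gt_one (b :: m) h2 (by simp)
      rw [← h] at this
      simp [hj] at this
      linarith
  | cons b m ih =>
    intro l₂ h1 h2 h
    rcases l₂ with _ | ⟨b', m'⟩
    · exfalso
      have := hj_gt_one (b :: m) h1 (by simp)
      rw [h] at this
      simp [hj] at this
      linarith
    · have hbm : ∀ x ∈ m, 2 ≤ x := fun x hx => h1 x (List.mem_cons_of_mem b hx)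
      have hbm' : ∀ x ∈ m', 2 ≤ x := fun x hx => h2 x (List.mem_cons_of_mem b' hx)
      have key : ∀ (L : List ℕ), (∀ x ∈ L, 2 ≤ x) → 0 ≤ 1 / hj L ∧ 1 / hj L < 1 := by
        intro L hL
        rcases eq_or_ne L [] with rfl | hne
        · simp [hj]
        · have h1L := hj_gt_one L hL hne
          constructor
          · positivity
          · rw [div_lt_one (by linarith)]; linarith
      obtain ⟨u1, u2⟩ := key m hbm
      obtain ⟨v1, v2⟩ := key m' hbm'
      have hh : (b : ℚ) - 1 / hj m = (b' : ℚ) - 1 / hj m' := h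
      have hbb : b = b' := by
        rcases lt_trichotomy b b' with hlt | heq | hgt
        · exfalso
          have : (b:ℚ) + 1 ≤ (b':ℚ) := by exact_mod_cast hlt
          linarith
        · exact heq
        · exfalso
          have : (b':ℚ) + 1 ≤ (b:ℚ) := by exact_mod_cast hgt
          linarith
      subst hbb
      have htail : 1 / hj m = 1 / hj m' := by linarith
      have : m = m' := by
        rcases eq_or_ne m [] with rfl | hne
        · rcases eq_or_ne m' [] with rfl | hne'
          · rfl
          · exfalso
            have h1L := hj_gt_one m' hbm' hne'
            simp [hj] at htail
            linarith
        · rcases eq_or_ne m' [] with rfl | hne'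
          · exfalso
            have h1L := hj_gt_one m hbm hne
            simp [hj] at htail
            linarith
          · have g1 := hj_gt_one m hbm hne
            have g2 := hj_gt_one m' hbm' hne'
            have : hj m = hj m' := by
              field_simp at htail
              linarith
            exact ih m' hbm hbm' this
      rw [this]

/-- identification of coprime positive fractions -/
lemma frac_eq (p q N a x₁ y₁ x₂ y₂ : ℤ) (hq : 0 < q) (ha : 0 < a)
    (hb1 : x₁*p + y₁*q = 1) (hb2 : x₂*N + y₂*a = 1)
    (h : (p:ℚ)/q = (N:ℚ)/a) : p = N ∧ q = a := by
  have hpa : p * a = N * q := by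
    have hq' : ((q:ℚ)) ≠ 0 := by exact_mod_cast hq.ne'
    have ha' : ((a:ℚ)) ≠ 0 := by exact_mod_cast ha.ne'
    have := (div_eq_div_iff hq' ha').1 h
    exact_mod_cast this
  have e1 : a = q * (x₁*N + y₁*a) := by linear_combination (-a) * hb1 + x₁ * hpa
  have e2 : q = a * (x₂*p + y₂*q) := by linear_combination (-q) * hb2 + (-x₂) * hpa
  set u := x₁*N + y₁*a with hu
  set v := x₂*p + y₂*q with hv
  have hq0 : q ≠ 0 := hq.ne'
  have huv : u * v = 1 := by
    have h3 : q * (u * v) = q * 1 := by linear_combination (-v) * e1 + (-1) * e2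
    exact mul_left_cancel₀ hq0 h3
  have hupos : 0 < u := by nlinarith
  have hvpos : 0 < v := by nlinarith
  have hu1 : u = 1 := by nlinarith
  have hqa : q = a := by rw [e1, hu1, mul_one]
  refine ⟨?_, hqa⟩
  have := hpa
  rw [hqa] at this
  exact mul_right_cancel₀ ha.ne' this

/-- effect of the left `T`-move on the matrix of a string -/
lemma PC_left (b : ℕ) (L : List ℕ) (p y q w : ℤ) (h : PC (b :: L) = (p, y, q, w)) :
    PC ((b + 1) :: (L ++ [2])) = (2*p + 2*q + y + w, -(p+q), 2*q + w, -q) := by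
  rcases hE : PC L with ⟨e,f,g,h'⟩
  rw [PC_cons, hE] at h
  simp only [hjM, mulM, Prod.mk.injEq] at h
  obtain ⟨hp, hy, hq, hw⟩ := h
  rw [PC_cons, PC_append, hE]
  simp only [PC, hjM, mulM, Prod.mk.injEq]
  push_cast
  refine ⟨by linear_combination 2*hp + hy + 2*hq + hw, by linear_combination (-1)*hp + (-1)*hq,
    by linear_combination 2*hq + hw, by linear_combination (-1)*hq⟩

/-- effect of the right `T`-move on the matrix of a string -/
lemma PC_right (b : ℕ) (L : List ℕ) (p y q w : ℤ) (h : PC (L ++ [b]) = (p, y, q, w)) :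
    PC (2 :: (L ++ [b + 1])) = (2*p - q - 2*y + w, 2*y - w, p - y, y) := by
  rcases hE : PC L with ⟨e,f,g,h'⟩
  rw [PC_append, hE] at h
  simp only [PC, hjM, mulM, Prod.mk.injEq] at h
  obtain ⟨hp, hy, hq, hw⟩ := h
  rw [PC_cons, PC_append, hE]
  simp only [PC, hjM, mulM, Prod.mk.injEq]
  push_cast
  refine ⟨by linear_combination 2*hp + (-1)*hq + (-2)*hy + hw, by linear_combination 2*hy + (-1)*hw,
    by linear_combination hp + (-1)*hy, by linear_combination hy⟩

lemma PC_rep (j : ℕ) :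
    PC (List.replicate j 2 ++ [3]) = (2*(j:ℤ)+3, -((j:ℤ)+1), 2*(j:ℤ)+1, -(j:ℤ)) := by
  induction j with
  | zero => simp [PC, hjM, mulM]
  | succ j ih =>
    rw [List.replicate_succ, List.cons_append, PC_cons, ih]
    simp only [hjM, mulM, Prod.mk.injEq]
    push_cast
    refine ⟨by ring, by ring, by ring, by ring⟩

/-- every `T`-fraction is realized by an actual `T_d`-string -/
lemma realize (d : ℕ) (hd : 1 ≤ d) :
    ∀ N l l' : ℕ, l + l' ≤ N → 1 ≤ l → 1 ≤ l' → IsCoprime (l:ℤ) (l':ℤ) →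
    ∃ Cl : List ℕ, TString d Cl ∧ (∀ x ∈ Cl, 2 ≤ x) ∧
      PC Cl = ((d:ℤ)*((l:ℤ)+l')^2, -((d:ℤ)*((l:ℤ)+l')*l' - 1),
               (d:ℤ)*((l:ℤ)+l')*l - 1, -((d:ℤ)*l*l' - 1)) := by
  intro N
  induction N with
  | zero => intro l l' hN hl hl' _; omega
  | succ N ihN =>
    intro l l' hN hl hl' hcop
    rcases lt_trichotomy l l' with hlt | heq | hgt
    · -- left move, predecessor (l, l' - l)
      obtain ⟨c, rfl⟩ : ∃ c, l' = l + c := ⟨l' - l, by omega⟩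
      have hc : 1 ≤ c := by omega
      have hcop' : IsCoprime (l:ℤ) (c:ℤ) := by
        obtain ⟨u, v, huv⟩ := hcop
        exact ⟨u + v, v, by push_cast at huv ⊢; linear_combination huv⟩
      obtain ⟨C₀, hT, hE2, hPC⟩ := ihN l c (by omega) hl hc hcop'
      have hC₀ne : C₀ ≠ [] := by
        intro hnil
        rw [hnil] at hPC
        simp only [PC, Prod.mk.injEq] at hPC
        have h1 := hPC.1
        have hd' : (1:ℤ) ≤ (d:ℤ) := by exact_mod_cast hd
        have hlc : (2:ℤ) ≤ (l:ℤ) + c := by push_cast; omega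
        nlinarith
      rcases C₀ with _ | ⟨b, L⟩
      · exact absurd rfl hC₀ne
      · have hb2 : 2 ≤ b := hE2 b List.mem_cons_self
        refine ⟨(b+1) :: (L ++ [2]), TString.left d b L hT, ?_, ?_⟩
        · intro x hx
          rcases List.mem_cons.1 hx with rfl | hx
          · omega
          · rcases List.mem_append.1 hx with hx | hx
            · exact hE2 x (List.mem_cons_of_mem b hx)
            · simp at hx; omega
        · rw [PC_left b L _ _ _ _ hPC]
          simp only [Prod.mk.injEq]
          push_cast
          refine ⟨by ring, by ring, by ring, by ring⟩
    · -- base case l = l' = 1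
      subst heq
      have hl1 : l = 1 := by
        have hu := isCoprime_self.1 hcop
        have := (Int.isUnit_iff.1 hu).resolve_right (by omega)
        exact_mod_cast this
      subst hl1
      rcases d with _ | _ | j
      · omega
      · refine ⟨[4], TString.base₁, by intro x hx; simp at hx; omega, ?_⟩
        simp [PC, hjM, mulM]
      · refine ⟨3 :: (List.replicate j 2 ++ [3]), ?_, ?_, ?_⟩
        · have := TString.base (j+2) (by omega)
          simpa using this
        · intro x hx
          rcases List.mem_cons.1 hx with rfl | hx
          · omega
          · rcases List.mem_append.1 hx with hx | hx
            · rw [List.eq_of_mem_replicate hx]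
            · simp at hx; omega
        · rw [PC_cons, PC_rep]
          simp only [hjM, mulM, Prod.mk.injEq]
          push_cast
          refine ⟨by ring, by ring, by ring, by ring⟩
    · -- right move, predecessor (l - l', l')
      obtain ⟨c, rfl⟩ : ∃ c, l = c + l' := ⟨l - l', by omega⟩
      have hc : 1 ≤ c := by omega
      have hcop' : IsCoprime (c:ℤ) (l':ℤ) := by
        obtain ⟨u, v, huv⟩ := hcop
        exact ⟨u, u + v, by push_cast at huv ⊢; linear_combination huv⟩
      obtain ⟨C₀, hT, hE2, hPC⟩ := ihN c l' (by omega) hc hl' hcop'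
      have hC₀ne : C₀ ≠ [] := by
        intro hnil
        rw [hnil] at hPC
        simp only [PC, Prod.mk.injEq] at hPC
        have h1 := hPC.1
        have hd' : (1:ℤ) ≤ (d:ℤ) := by exact_mod_cast hd
        have hlc : (2:ℤ) ≤ (c:ℤ) + l' := by push_cast; omega
        nlinarith
      obtain ⟨L, b, rfl⟩ := C₀.eq_nil_or_concat'.resolve_left hC₀ne
      have hb2 : 2 ≤ b := hE2 b (by simp)
      refine ⟨2 :: (L ++ [b+1]), TString.right d b L hT, ?_, ?_⟩
      · intro x hx
        rcases List.mem_cons.1 hx with rfl | hx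
        · omega
        · rcases List.mem_append.1 hx with hx | hx
          · exact hE2 x (List.mem_append.2 (Or.inl hx))
          · simp at hx; omega
      · rw [PC_right b L _ _ _ _ hPC]
        simp only [Prod.mk.injEq]
        push_cast
        refine ⟨by ring, by ring, by ring, by ring⟩

/-- If `[a₁,…,a_r]` and `[b₁,…,b_s]` are conjugate strings (`= n/a` and `n/(n−a)`)
and `t ≥ 0`, then the conjugate of `[a_r,…,a₁, t+2, b₁,…,b_s]` is a `T_{t+1}`-string. -/
theorem conjugate_of_wing_string_is_T (A B C : List ℕ) (n a m k t : ℕ)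
    (hA : ∀ x ∈ A, 2 ≤ x) (hB : ∀ x ∈ B, 2 ≤ x) (hC : ∀ x ∈ C, 2 ≤ x)
    (hAne : A ≠ []) (hBne : B ≠ [])
    (ha : 0 < a) (han : a < n) (hcop : Nat.gcd a n = 1)
    (h1 : hj A = (n : ℚ) / a)
    (h2 : hj B = (n : ℚ) / ((n : ℚ) - a))
    (hk : 0 < k) (hkm : k < m) (hkcop : Nat.gcd k m = 1)
    (h3 : hj (A.reverse ++ (t + 2) :: B) = (m : ℚ) / k)
    (h4 : hj C = (m : ℚ) / ((m : ℚ) - k)) :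
    TString (t + 1) C := by
  -- Bezout for (a, n)
  have hbezA : (a:ℤ) * (Nat.gcdA a n) + (n:ℤ) * (Nat.gcdB a n) = 1 := by
    have hg := Nat.gcd_eq_gcd_ab a n
    rw [hcop] at hg
    push_cast at hg
    linarith
  -- identify PC A
  rcases hPA : PC A with ⟨pA, yA, qA, wA⟩
  have invA := PC_inv A hA hAne
  have detA := PC_det A
  have hjA := hj_PC A hA
  rw [hPA] at invA detA hjA
  dsimp only at invA detA hjA
  obtain ⟨a1, a2, a3, a4, a5, a7, a8⟩ := invA
  have hAid : pA = (n:ℤ) ∧ qA = (a:ℤ) :=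
    frac_eq pA qA (n:ℤ) (a:ℤ) wA (-yA) (Nat.gcdB a n) (Nat.gcdA a n)
      (by omega) (by exact_mod_cast ha)
      (by linear_combination detA) (by linear_combination hbezA)
      (by rw [← hjA, h1]; push_cast; ring_nf)
  obtain ⟨hpA, hqA⟩ := hAid
  -- identify PC B
  rcases hPB : PC B with ⟨pB, yB, qB, wB⟩
  have invB := PC_inv B hB hBne
  have detB := PC_det B
  have hjB := hj_PC B hB
  rw [hPB] at invB detB hjB
  dsimp only at invB detB hjB
  obtain ⟨b1, b2, _⟩ := invB
  have hBid : pB = (n:ℤ) ∧ qB = (n:ℤ) - (a:ℤ) :=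
    frac_eq pB qB (n:ℤ) ((n:ℤ) - (a:ℤ)) wB (-yB)
      (Nat.gcdA a n + Nat.gcdB a n) (-(Nat.gcdA a n))
      (by omega) (by push_cast; omega)
      (by linear_combination detB) (by linear_combination hbezA)
      (by rw [← hjB, h2]; push_cast; ring_nf)
  obtain ⟨hpB, hqB⟩ := hBid
  -- the wing string
  set W : List ℕ := A.reverse ++ (t + 2) :: B with hWdef
  have hW2 : ∀ x ∈ W, 2 ≤ x := by
    intro x hx
    rcases List.mem_append.1 hx with hx | hx
    · exact hA x (List.mem_reverse.1 hx)
    · rcases List.mem_cons.1 hx with rfl | hx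
      · omega
      · exact hB x hx
  have hWne : W ≠ [] := by
    simp [hWdef]
  rcases hPW : PC W with ⟨pW, yW, qW, wW⟩
  have invW := PC_inv W hW2 hWne
  have detW := PC_det W
  have hjW := hj_PC W hW2
  rw [hPW] at invW detW hjW
  dsimp only at invW detW hjW
  obtain ⟨w1, w2, _⟩ := invW
  -- compute PC W
  have hPWcalc : PC W = mulM ((n:ℤ), -(a:ℤ), -yA, wA) (mulM (hjM (t+2)) (pB, yB, qB, wB)) := by
    rw [hWdef, PC_append, PC_reverse, hPA, PC_cons, hPB, hpA, hqA]
  rw [hPW] at hPWcalc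
  rw [hpB, hqB] at hPWcalc
  simp only [hjM, mulM, Prod.mk.injEq] at hPWcalc
  obtain ⟨hWp, hWy, hWq, hWw⟩ := hPWcalc
  -- Bezout for (k, m)
  have hbezW : (k:ℤ) * (Nat.gcdA k m) + (m:ℤ) * (Nat.gcdB k m) = 1 := by
    have hg := Nat.gcd_eq_gcd_ab k m
    rw [hkcop] at hg
    push_cast at hg
    linarith
  have hWid : pW = (m:ℤ) ∧ qW = (k:ℤ) :=
    frac_eq pW qW (m:ℤ) (k:ℤ) wW (-yW) (Nat.gcdB k m) (Nat.gcdA k m)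
      (by omega) (by exact_mod_cast hk)
      (by linear_combination detW) (by linear_combination hbezW)
      (by rw [← hjW, h3]; push_cast; ring_nf)
  obtain ⟨hpW, hqW⟩ := hWid
  -- the numerical identities
  have hdetA' : (n:ℤ) * wA - yA * (a:ℤ) = 1 := by
    rw [hpA, hqA] at detA; linarith
  have hm : (m:ℤ) = ((t:ℤ)+1) * (n:ℤ)^2 := by
    rw [← hpW]
    rw [hWp]
    push_cast
    ring
  have hky : (k:ℤ) = ((t:ℤ)+1) * (n:ℤ) * (-yA) + 1 := by
    rw [← hqW, hWq]
    push_cast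
    linear_combination hdetA'
  -- bounds on -yA
  have hyA1 : 1 ≤ -yA := by omega
  have hyAn : -yA ≤ (n:ℤ) - 1 := by
    rw [hpA] at a8
    omega
  -- natural number data
  set nd : ℕ := (-yA).toNat with hnd
  have hndZ : (nd:ℤ) = -yA := Int.toNat_of_nonneg (by omega)
  have hnd1 : 1 ≤ nd := by omega
  have hndn : nd + 1 ≤ n := by omega
  set l : ℕ := n - nd with hl
  set l' : ℕ := nd with hl'
  have hlZ : (l:ℤ) = (n:ℤ) + yA := by
    rw [hl]
    push_cast [Nat.cast_sub (by omega : nd ≤ n)]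
    omega
  have hll' : l + l' = n := by omega
  have hlpos : 1 ≤ l := by omega
  have hcopll : IsCoprime (l:ℤ) (l':ℤ) := by
    refine ⟨wA, wA + (a:ℤ), ?_⟩
    rw [hlZ, hl']
    rw [hndZ]
    linear_combination hdetA'
  -- realize the T-string
  obtain ⟨C₀, hT, hC₀2, hPC₀⟩ :=
    realize (t+1) (by omega) (l + l') l l' le_rfl hlpos hnd1 hcopll
  -- identify hj C with hj C₀
  have hjC₀ := hj_PC C₀ hC₀2
  rw [hPC₀] at hjC₀
  dsimp only at hjC₀
  have hsum : ((l:ℤ) + (l':ℤ)) = (n:ℤ) := by push_cast; omega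
  have hnum : (m:ℚ) = ((((t+1:ℕ):ℤ) * ((l:ℤ)+(l':ℤ))^2 : ℤ) : ℚ) := by
    have : (m:ℤ) = ((t+1:ℕ):ℤ) * ((l:ℤ)+(l':ℤ))^2 := by
      rw [hsum, hm]; push_cast; ring
    exact_mod_cast this
  have hden : (m:ℚ) - (k:ℚ) = ((((t+1:ℕ):ℤ) * ((l:ℤ)+(l':ℤ)) * (l:ℤ) - 1 : ℤ) : ℚ) := by
    have : (m:ℤ) - (k:ℤ) = ((t+1:ℕ):ℤ) * ((l:ℤ)+(l':ℤ)) * (l:ℤ) - 1 := by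
      rw [hsum, hlZ, hm, hky]
      push_cast
      ring
    exact_mod_cast this
  have hjCC₀ : hj C = hj C₀ := by
    rw [h4, hjC₀, hden, hnum]
  rw [hj_inj C C₀ hC hC₀2 hjCC₀]
  exact hT
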